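/- Let p and q be coprime positive integers. Let f ∈ ℂ⟦x⟧[y] be a nonzero polynomial in y over the formal power series ring in x such that (i) p divides q·j − i for every monomial x^i y^j appearing in f (i.e., f is invariant under the cyclic action ξ·(x,y) = (ξ^{−1}x, ξ^{q}y) of the p-th roots of unity, so f defines a function on X(p;−1,q)), and (ii) x ∤ f. Then there exist g ∈ ℂ⟦x⟧[y] with x ∤ g and a natural number ν divisible by p such that g(x^p, x^q y) = x^ν · f(x,y) in ℂ⟦x⟧[y]. -/

import Mathlib

open Polynomial PowerSeries

/-- The substitution `f(x,y) ↦ f(x^p, x^q y)` on `ℂ⟦x⟧[y]`: writing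
`f = Σ a_{ij} x^i y^j`, it is `Σ a_{ij} x^{p·i+q·j} y^j`. The coefficient of `y^j`
is `x^{q·j} · (coeff_j f)(x^p)`. -/
noncomputable def substPQ (p q : ℕ) (f : Polynomial (PowerSeries ℂ)) :
    Polynomial (PowerSeries ℂ) :=
  ∑ j ∈ f.support,
    Polynomial.monomial j
      ((PowerSeries.X : PowerSeries ℂ) ^ (q * j) *
        PowerSeries.mk fun m =>
          if p ∣ m then PowerSeries.coeff (m / p) (f.coeff j) else 0)

/-- Lemma 4.9 (formal power series version): if `f ∈ ℂ⟦x⟧[y]` is nonzero, invariant under the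
action of the `p`-th roots of unity on `X(p;−1,q)` (i.e. `p ∣ q·j − i` for every monomial
`x^i y^j` appearing in `f`), and `x ∤ f`, then there exist `g ∈ ℂ⟦x⟧[y]` with `x ∤ g` and
`ν ∈ ℕ` with `p ∣ ν` such that `g(x^p, x^q y) = x^ν · f(x,y)`. -/
theorem lemma_descend_blowup (p q : ℕ) (hp : 0 < p) (hq : 0 < q) (hpq : Nat.Coprime p q)
    (f : Polynomial (PowerSeries ℂ)) (hf0 : f ≠ 0)
    (hinv : ∀ i j : ℕ, PowerSeries.coeff i (f.coeff j) ≠ 0 → (p : ℤ) ∣ (q * j - i : ℤ))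
    (hx : ∃ j : ℕ, PowerSeries.constantCoeff (f.coeff j) ≠ 0) :
    ∃ (g : Polynomial (PowerSeries ℂ)) (ν : ℕ),
      (∃ j : ℕ, PowerSeries.constantCoeff (g.coeff j) ≠ 0) ∧
      p ∣ ν ∧
      substPQ p q g = Polynomial.C ((PowerSeries.X : PowerSeries ℂ) ^ ν) * f := by
  classical
  set D : Finset ℕ := (Finset.range (q * f.natDegree + 1)).filter
    (fun d => ∃ j ∈ f.support, d ≤ q * j ∧ PowerSeries.coeff (q * j - d) (f.coeff j) ≠ 0)
    with hD
  have hD0 : D.Nonempty := by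
    obtain ⟨j0, h0⟩ := hx
    have hj0 : f.coeff j0 ≠ 0 := fun h => h0 (by simp [h])
    have hjs : j0 ∈ f.support := Polynomial.mem_support_iff.2 hj0
    refine ⟨q * j0, Finset.mem_filter.2 ⟨?_, j0, hjs, le_rfl, ?_⟩⟩
    · exact Finset.mem_range.2 (Nat.lt_succ_of_le
        (Nat.mul_le_mul_left q (Polynomial.le_natDegree_of_ne_zero hj0)))
    · simpa [PowerSeries.coeff_zero_eq_constantCoeff] using h0
  set ν : ℕ := D.max' hD0 with hν
  have hνD : ν ∈ D := D.max'_mem hD0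
  -- upper bound property
  have hub : ∀ j i : ℕ, PowerSeries.coeff i (f.coeff j) ≠ 0 → q * j ≤ i + ν := by
    intro j i hne
    by_cases h : q * j ≤ i
    · omega
    · have hj : f.coeff j ≠ 0 := fun hh => hne (by simp [hh])
      have hd : (q * j - i) ∈ D := by
        refine Finset.mem_filter.2 ⟨?_, j, Polynomial.mem_support_iff.2 hj, by omega, ?_⟩
        · exact Finset.mem_range.2 (by
            have := Nat.mul_le_mul_left q (Polynomial.le_natDegree_of_ne_zero hj)
            omega)
        · have : q * j - (q * j - i) = i := by omega
          rw [this]; exact hne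
      have := D.le_max' _ hd
      omega
  -- p ∣ ν
  obtain ⟨-, j1, hj1s, hj1le, hj1ne⟩ := Finset.mem_filter.1 hνD
  have hpν : p ∣ ν := by
    have := hinv (q * j1 - ν) j1 hj1ne
    have h2 : ((q : ℤ) * j1 - (q * j1 - ν : ℕ) : ℤ) = (ν : ℤ) := by
      push_cast [Nat.cast_sub hj1le]; ring
    rw [h2] at this
    exact_mod_cast this
  -- the series G j
  set G : ℕ → PowerSeries ℂ := fun j => PowerSeries.mk fun n =>
    if ν ≤ q * j + p * n then PowerSeries.coeff (q * j + p * n - ν) (f.coeff j) else 0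
    with hG
  set g : Polynomial (PowerSeries ℂ) := ∑ j ∈ f.support, Polynomial.monomial j (G j) with hg
  have hgc : ∀ k, g.coeff k = if k ∈ f.support then G k else 0 := by
    intro k
    rw [hg, Polynomial.finset_sum_coeff]
    simp only [Polynomial.coeff_monomial]
    rw [Finset.sum_ite_eq' f.support k G]
  -- support of g
  have hGsupp : ∀ j ∈ f.support, G j ≠ 0 := by
    intro j hj hGz
    have hfj : f.coeff j ≠ 0 := Polynomial.mem_support_iff.1 hj
    obtain ⟨i, hi⟩ : ∃ i, PowerSeries.coeff i (f.coeff j) ≠ 0 := by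
      by_contra h
      push_neg at h
      exact hfj (PowerSeries.ext fun n => by simpa using h n)
    have hle : q * j ≤ i + ν := hub j i hi
    have hdvd : p ∣ (i + ν - q * j) := by
      have h1 := hinv i j hi
      have : ((i + ν - q * j : ℕ) : ℤ) = (ν : ℤ) - ((q : ℤ) * j - i) := by
        push_cast [Nat.cast_sub hle]; ring
      have h3 : (p : ℤ) ∣ ((i + ν - q * j : ℕ) : ℤ) := by
        rw [this]
        exact dvd_sub (by exact_mod_cast hpν) h1
      exact_mod_cast h3
    obtain ⟨n, hn⟩ := hdvd
    have hcn : PowerSeries.coeff n (G j) ≠ 0 := by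
      rw [hG]
      simp only [PowerSeries.coeff_mk]
      have h4 : q * j + p * n = i + ν := by omega
      rw [h4, if_pos (by omega)]
      simpa using hi
    exact hcn (by rw [hGz]; simp)
  have hgsupp : g.support = f.support := by
    ext k
    rw [Polynomial.mem_support_iff, hgc k]
    constructor
    · intro h
      by_contra hk
      simp [hk] at h
    · intro h
      simp only [h, if_true]
      exact hGsupp k h
  refine ⟨g, ν, ⟨j1, ?_⟩, hpν, ?_⟩
  · rw [← PowerSeries.coeff_zero_eq_constantCoeff_apply, hgc j1, if_pos hj1s, hG]
    simp only [PowerSeries.coeff_mk, mul_zero, add_zero]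
    rw [if_pos hj1le]
    exact hj1ne
  · -- main equation
    have key : ∀ j ∈ f.support,
        (PowerSeries.X : PowerSeries ℂ) ^ (q * j) *
          (PowerSeries.mk fun m => if p ∣ m then PowerSeries.coeff (m / p) (g.coeff j) else 0)
        = (PowerSeries.X : PowerSeries ℂ) ^ ν * f.coeff j := by
      intro j hj
      ext m
      rw [PowerSeries.coeff_X_pow_mul', PowerSeries.coeff_X_pow_mul', hgc j, if_pos hj, hG]
      by_cases h1 : ν ≤ m
      · rw [if_pos h1]
        by_cases h2 : PowerSeries.coeff (m - ν) (f.coeff j) = 0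
        · rw [h2]
          split_ifs with h3
          · simp only [PowerSeries.coeff_mk]
            split_ifs with h4 h5
            · obtain ⟨c, hc⟩ := h4
              have : q * j + p * ((m - q * j) / p) = m := by
                rw [hc, Nat.mul_div_cancel_left _ hp]; omega
              rw [this] at h5 ⊢
              have : m - ν = m - ν := rfl
              convert h2 using 2
            · rfl
            · rfl
          · rfl
        · have hle : q * j ≤ m := by have := hub j (m - ν) h2; omega
          have hdvd : p ∣ (m - q * j) := by
            have hA := hinv (m - ν) j h2
            have : ((m - q * j : ℕ) : ℤ) = (ν : ℤ) - ((q : ℤ) * j - (m - ν : ℕ)) := by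
              push_cast [Nat.cast_sub hle, Nat.cast_sub h1]; ring
            have h3 : (p : ℤ) ∣ ((m - q * j : ℕ) : ℤ) := by
              rw [this]; exact dvd_sub (by exact_mod_cast hpν) hA
            exact_mod_cast h3
          rw [if_pos hle]
          simp only [PowerSeries.coeff_mk]
          rw [if_pos hdvd]
          have h4 : q * j + p * ((m - q * j) / p) = m := by
            rw [Nat.mul_div_cancel' hdvd]; omega
          rw [h4, if_pos h1]
      · rw [if_neg h1]
        split_ifs with h3
        · simp only [PowerSeries.coeff_mk]
          split_ifs with h4 h5
          · exfalso
            have : q * j + p * ((m - q * j) / p) ≤ m := by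
              have := Nat.mul_div_le (m - q * j) p
              omega
            omega
          · rfl
          · rfl
        · rfl
    rw [substPQ, hgsupp]
    conv_rhs => rw [f.as_sum_support, Finset.mul_sum]
    refine Finset.sum_congr rfl fun j hj => ?_
    rw [Polynomial.C_mul_monomial, key j hj]
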